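/- Let $SP_s(x)$ be a generalized star with center $x$ of degree $s \ge 3$, and let $w$ be a vertex such that every vertex is within distance $i$ of $w$. If $|SP_s(x)| = si$, then either $w = x$ and $SP_s(x)-x = (s-1)P_i + P_{i-1}$ (disjoint union of $s-1$ paths of order $i$ and one of order $i-1$), or $d(x,w)=1$, $s=3$, and $SP_s(x)-\{x,w\} = P_i + 2P_{i-1}$. -/

import Mathlib

open SimpleGraph

/-- A burning sequence of length `k` (0-indexed: `x 0, …, x (k-1)`):
the distance conditions and the covering condition. -/
def IsBurnSeq {V : Type*} (G : SimpleGraph V) (k : ℕ) (x : ℕ → V) : Prop :=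
  (∀ i j : ℕ, i < j → j < k → (↑(j - i) : ℕ∞) ≤ G.edist (x i) (x j)) ∧
  (∀ v : V, ∃ i < k, G.edist (x i) v ≤ (↑(k - 1 - i) : ℕ∞))

/-- The burning number of a graph: the least length of a burning sequence. -/
noncomputable def burningNumber {V : Type*} (G : SimpleGraph V) : ℕ :=
  sInf {k | ∃ x : ℕ → V, IsBurnSeq G k x}

/-- `G` is a path graph of order `m`: a tree with all degrees at most `2`. -/
def IsPathGraph {V : Type*} (G : SimpleGraph V) (m : ℕ) : Prop :=
  G.IsTree ∧ Nat.card V = m ∧ ∀ v : V, (G.neighborSet v).ncard ≤ 2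


namespace StarAux

variable {V : Type*}

/-- Transfer a walk whose support lies in `s` to the induced subgraph. -/
lemma toInduce {G : SimpleGraph V} {s : Set V} {a b : V} (p : G.Walk a b)
    (h : ∀ v ∈ p.support, v ∈ s) (ha : a ∈ s) (hb : b ∈ s) :
    ∃ q : (G.induce s).Walk ⟨a, ha⟩ ⟨b, hb⟩, q.length = p.length := by
  induction p with
  | nil => exact ⟨Walk.nil, rfl⟩
  | @cons a c b hac p ih =>
    have hc : c ∈ s := h c (by simp)
    obtain ⟨q, hq⟩ := ih (fun v hv => h v (by simp [hv])) hc hb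
    exact ⟨Walk.cons (by exact hac) q, congrArg (· + 1) hq⟩

lemma reach_support {G : SimpleGraph V} {a b v : V} (p : G.Walk a b) (h : v ∈ p.support) :
    G.Reachable a v := by classical exact ⟨p.takeUntil v h⟩

lemma isAcyclic_induce {G : SimpleGraph V} (h : G.IsAcyclic) (s : Set V) :
    (G.induce s).IsAcyclic := by
  intro v c hc
  exact h (c.map (Embedding.induce s).toHom)
    ((Walk.map_isCycle_iff_of_injective (Subtype.val_injective)).mpr hc)

lemma connected_induce_supp {W : Type*} {H : SimpleGraph W} (c : H.ConnectedComponent) :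
    (H.induce c.supp).Connected := by
  obtain ⟨v, hv⟩ := c.exists_rep
  rw [connected_iff]
  constructor
  · rintro ⟨a, ha⟩ ⟨b, hb⟩
    rw [ConnectedComponent.mem_supp_iff] at ha hb
    obtain ⟨p⟩ : H.Reachable a b := ConnectedComponent.eq.mp (ha.trans hb.symm)
    have hsup : ∀ y ∈ p.support, y ∈ c.supp := by
      intro y hy
      rw [ConnectedComponent.mem_supp_iff, ← ha]
      exact ConnectedComponent.eq.mpr (reach_support p hy).symm
    obtain ⟨q, _⟩ := toInduce p hsup ha hb
    exact ⟨q⟩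
  · exact ⟨⟨v, by rw [ConnectedComponent.mem_supp_iff]; exact hv⟩⟩

lemma ncard_neighbor_induce_le {G : SimpleGraph V} {s : Set V} (v : ↥s) (t : Set V)
    (hsub : ∀ u : ↥s, G.Adj ↑v ↑u → (u : V) ∈ t) (ht : t.Finite) :
    ((G.induce s).neighborSet v).ncard ≤ t.ncard := by
  refine Set.ncard_le_ncard_of_injOn (s := (G.induce s).neighborSet v) (t := t)
    (fun u => (↑u : V)) (fun u hu => hsub u hu) (fun a _ b _ h => Subtype.ext h) ht


variable {W : Type*}

lemma exists_adj_dist {K : SimpleGraph W} (hc : K.Connected) {u v : W} {d : ℕ}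
    (h : K.dist u v = d + 1) :
    ∃ z, K.Adj z v ∧ K.dist u z = d := by
  obtain ⟨p, hp⟩ := hc.exists_walk_length_eq_dist v u
  cases p with
  | nil =>
    rw [SimpleGraph.dist_comm] at h
    simp at h
  | @cons a z b hadj q =>
    refine ⟨z, hadj.symm, ?_⟩
    have hq : q.length = d := by
      have : K.dist v u = d + 1 := by rw [SimpleGraph.dist_comm]; exact h
      simpa [this] using hp
    have h1 : K.dist u z ≤ d := by
      have := SimpleGraph.dist_le q.reverse
      simpa [hq, SimpleGraph.dist_comm] using this
    have h2 : d ≤ K.dist u z := by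
      have htri : K.dist u v ≤ K.dist u z + K.dist z v := hc.dist_triangle
      have hzv : K.dist z v = 1 := SimpleGraph.dist_eq_one_iff_adj.mpr hadj.symm
      omega
    omega


lemma two_mem_ncard {s : Set W} (hs : s.Finite) {a b : W} (ha : a ∈ s) (hb : b ∈ s)
    (hab : a ≠ b) : 2 ≤ s.ncard := by
  have h1 : ({a, b} : Set W) ⊆ s := by
    intro y hy; rcases hy with rfl | hy
    · exact ha
    · rcases hy with rfl; exact hb
  calc 2 = ({a, b} : Set W).ncard := (Set.ncard_pair hab).symm
    _ ≤ s.ncard := Set.ncard_le_ncard h1 hs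

lemma three_mem_ncard {s : Set W} (hs : s.Finite) {a b c : W} (ha : a ∈ s) (hb : b ∈ s)
    (hc : c ∈ s) (hab : a ≠ b) (hac : a ≠ c) (hbc : b ≠ c) : 3 ≤ s.ncard := by
  have h1 : ({a, b, c} : Set W) ⊆ s := by
    intro y hy
    rcases hy with rfl | rfl | rfl
    · exact ha
    · exact hb
    · exact hc
  have h2 : ({a, b, c} : Set W).ncard = 3 := by
    rw [Set.ncard_insert_of_notMem (by simp [hab, hac]) (Set.Finite.subset hs (by
      intro y hy; rcases hy with rfl | rfl; exacts [hb, hc])), Set.ncard_pair hbc]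
  calc 3 = ({a, b, c} : Set W).ncard := h2.symm
    _ ≤ s.ncard := Set.ncard_le_ncard h1 hs

lemma dist_inj [Finite W] {K : SimpleGraph W} (hc : K.Connected)
    {u : W} (hu : (K.neighborSet u).ncard ≤ 1) (hdeg : ∀ v, (K.neighborSet v).ncard ≤ 2) :
    ∀ d : ℕ, {v | K.dist u v = d}.Subsingleton := by
  intro d
  induction d using Nat.strong_induction_on with
  | _ d ih =>
    match d with
    | 0 =>
      intro v1 h1 v2 h2
      simp only [Set.mem_setOf_eq] at h1 h2
      rw [hc.dist_eq_zero_iff] at h1 h2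
      rw [← h1, ← h2]
    | (d + 1) =>
      intro v1 h1 v2 h2
      simp only [Set.mem_setOf_eq] at h1 h2
      by_contra hne
      obtain ⟨z1, hz1a, hz1d⟩ := exists_adj_dist hc h1
      obtain ⟨z2, hz2a, hz2d⟩ := exists_adj_dist hc h2
      have hz12 : z1 = z2 := ih d (by omega) hz1d hz2d
      subst hz12
      match d, hz1d with
      | 0, hz1d =>
        have hz1u : z1 = u := ((hc.dist_eq_zero_iff).mp hz1d).symm
        subst hz1u
        have : 2 ≤ (K.neighborSet z1).ncard :=
          two_mem_ncard (Set.toFinite _) hz1a hz2a hne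
        omega
      | (e + 1), hz1d =>
        obtain ⟨y, hya, hyd⟩ := exists_adj_dist hc hz1d
        have hy1 : y ≠ v1 := by
          intro h; rw [h] at hyd; omega
        have hy2 : y ≠ v2 := by
          intro h; rw [h] at hyd
          rw [hyd] at h2; omega
        have : 3 ≤ (K.neighborSet z1).ncard :=
          three_mem_ncard (Set.toFinite _) hya.symm hz1a hz2a hy1 hy2 hne
        have := hdeg z1
        omega

lemma card_supp_le [Finite W] {H : SimpleGraph W}
    (hdeg : ∀ v : W, (H.neighborSet v).ncard ≤ 2)
    (u : W) (hu : (H.neighborSet u).ncard ≤ 1) (m : ℕ)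
    (hm : ∀ v : W, H.Reachable u v → H.dist u v < m) :
    (H.connectedComponentMk u).supp.ncard ≤ m := by
  classical
  set c := H.connectedComponentMk u with hc
  set K := H.induce c.supp with hK
  have hu0 : u ∈ c.supp := by rw [ConnectedComponent.mem_supp_iff]
  set u₀ : ↥c.supp := ⟨u, hu0⟩ with hu₀
  have hKconn : K.Connected := connected_induce_supp c
  have hKdist : ∀ v : ↥c.supp, K.dist u₀ v < m := by
    intro v
    have hv2 : H.connectedComponentMk ↑v = c := v.2
    have hr : H.Reachable u ↑v := (ConnectedComponent.eq.mp (hv2.trans hc)).symm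
    obtain ⟨p, hp⟩ := hr.exists_walk_length_eq_dist
    have hsup : ∀ y ∈ p.support, y ∈ c.supp := by
      intro y hy
      rw [ConnectedComponent.mem_supp_iff, hc]
      exact (ConnectedComponent.eq.mpr (reach_support p hy)).symm
    obtain ⟨q, hq⟩ := toInduce p hsup hu0 (hsup _ p.end_mem_support)
    have h1 : K.dist u₀ ⟨↑v, hsup _ p.end_mem_support⟩ ≤ q.length := SimpleGraph.dist_le q
    have h2 : K.dist u₀ ⟨↑v, hsup _ p.end_mem_support⟩ ≤ p.length := hq ▸ h1
    have hveq : (⟨(↑v : W), hsup _ p.end_mem_support⟩ : ↥c.supp) = v := Subtype.coe_eta v _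
    rw [hveq] at h2
    calc K.dist u₀ v ≤ p.length := h2
      _ = H.dist u ↑v := hp
      _ < m := hm ↑v hr
  have hKdeg : ∀ v : ↥c.supp, (K.neighborSet v).ncard ≤ 2 := fun v =>
    le_trans (ncard_neighbor_induce_le v (H.neighborSet ↑v) (fun _ h => h) (Set.toFinite _))
      (hdeg ↑v)
  have hKu : (K.neighborSet u₀).ncard ≤ 1 :=
    le_trans (ncard_neighbor_induce_le u₀ (H.neighborSet u) (fun _ h => h) (Set.toFinite _)) hu
  have hinj : Function.Injective (fun v : ↥c.supp => (⟨K.dist u₀ v, hKdist v⟩ : Fin m)) := by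
    intro v1 v2 h
    have heq : K.dist u₀ v1 = K.dist u₀ v2 := by simpa using congrArg Fin.val h
    exact dist_inj hKconn hKu hKdeg (K.dist u₀ v1) rfl heq.symm
  calc c.supp.ncard = Nat.card ↥c.supp := (Nat.card_coe_set_eq _).symm
    _ ≤ Nat.card (Fin m) := Nat.card_le_card_of_injective _ hinj
    _ = m := by simp


lemma path_ne {G : SimpleGraph V} (ht : G.IsTree) {a b y : V} (p1 p2 : G.Walk a b)
    (h1 : p1.IsPath) (h2 : p2.IsPath) (hy1 : y ∉ p1.support) (hy2 : y ∈ p2.support) : False := by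
  have := (ht.existsUnique_path a b).unique h1 h2
  rw [this] at hy1
  exact hy1 hy2

lemma second_vertex {G : SimpleGraph V} {S : Set V} {r v : V} (p : G.Walk r v)
    (hp : p.IsPath) (hr : r ∈ S) (hv : v ∈ Sᶜ)
    (hS : ∀ y ∈ p.support, y ∈ S → y = r) :
    ∃ (u : V) (hu : u ∈ Sᶜ), G.Adj r u ∧
      (G.induce Sᶜ).Reachable ⟨u, hu⟩ ⟨v, hv⟩ ∧
      (G.induce Sᶜ).dist ⟨u, hu⟩ ⟨v, hv⟩ + 1 ≤ p.length := by
  cases p with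
  | nil => exact absurd hr hv
  | @cons a c b hadj q =>
    rw [Walk.cons_isPath_iff] at hp
    have hq : ∀ y ∈ q.support, y ∈ Sᶜ := by
      intro y hy hyS
      exact hp.2 ((hS y (by simp [hy]) hyS) ▸ hy)
    have hc : c ∈ Sᶜ := hq c q.start_mem_support
    obtain ⟨q', hq'⟩ := toInduce q hq hc hv
    refine ⟨c, hc, hadj, ⟨q'⟩, ?_⟩
    have := SimpleGraph.dist_le q'
    simp only [Walk.length_cons]
    omega

lemma walk_down {G : SimpleGraph V} {S : Set V} {a b : ↥S} (q : (G.induce S).Walk a b) :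
    ∃ p : G.Walk ↑a ↑b, p.IsPath → True := ⟨q.map (Embedding.induce S).toHom, fun _ => trivial⟩

lemma reach_down {G : SimpleGraph V} {S : Set V} {a b : ↥S}
    (h : (G.induce S).Reachable a b) :
    ∃ p : G.Walk ↑a ↑b, p.IsPath ∧ ∀ y ∈ p.support, y ∈ S := by
  classical
  obtain ⟨q⟩ := h
  refine ⟨(q.toPath.val).map (Embedding.induce S).toHom,
    Walk.map_isPath_of_injective Subtype.val_injective q.toPath.property, ?_⟩
  intro y hy
  change y ∈ (Walk.map (Embedding.induce S).toHom (q.toPath.val)).support at hy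
  rw [Walk.support_map, List.mem_map] at hy
  obtain ⟨z, _, rfl⟩ := hy
  exact z.2

lemma boundary_inj {G : SimpleGraph V} (ht : G.IsTree) {S : Set V} {x u1 u2 : V}
    (hx : x ∈ S) (h1 : G.Adj x u1) (h2 : G.Adj x u2)
    (hu1 : u1 ∈ Sᶜ) (hu2 : u2 ∈ Sᶜ)
    (hr : (G.induce Sᶜ).Reachable ⟨u1, hu1⟩ ⟨u2, hu2⟩) : u1 = u2 := by
  by_contra hne
  obtain ⟨p1, hp1, hp1S⟩ := reach_down hr
  have hx1 : x ∉ p1.support := fun h => (hp1S x h) hx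
  have hp2 : (Walk.cons h1.symm (Walk.cons h2 Walk.nil)).IsPath := by
    simp [Walk.cons_isPath_iff, h1.ne', h2.ne, hne]
  exact path_ne ht p1 (Walk.cons h1.symm (Walk.cons h2 Walk.nil)) hp1 hp2 hx1 (by simp)

lemma no_common {G : SimpleGraph V} (ht : G.IsTree) {x w u : V}
    (hxw : G.Adj x w) (h1 : G.Adj x u) (h2 : G.Adj w u) : False := by
  have hp1 : (Walk.cons hxw Walk.nil : G.Walk x w).IsPath := by
    simp [Walk.cons_isPath_iff, hxw.ne]
  have hp2 : (Walk.cons h1 (Walk.cons h2.symm Walk.nil) : G.Walk x w).IsPath := by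
    simp [Walk.cons_isPath_iff, h1.ne, h2.ne', hxw.ne]
  refine path_ne (y := u) ht (Walk.cons hxw Walk.nil)
    (Walk.cons h1 (Walk.cons h2.symm Walk.nil)) hp1 hp2 ?_ (by simp)
  simp [h1.ne', h2.ne']

lemma boundary_inj2 {G : SimpleGraph V} (ht : G.IsTree) {S : Set V} {x w u u' : V}
    (hx : x ∈ S) (hw : w ∈ S) (hxw : G.Adj x w) (h1 : G.Adj x u) (h2 : G.Adj w u')
    (hu : u ∈ Sᶜ) (hu' : u' ∈ Sᶜ)
    (hr : (G.induce Sᶜ).Reachable ⟨u, hu⟩ ⟨u', hu'⟩) : False := by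
  rcases eq_or_ne u u' with rfl | hne
  · exact no_common ht hxw h1 h2
  · obtain ⟨p1, hp1, hp1S⟩ := reach_down hr
    have hx1 : x ∉ p1.support := fun h => (hp1S x h) hx
    have hxu' : x ≠ u' := fun he => hu' (he ▸ hx)
    have huw : u ≠ w := fun he => hu (by rw [he]; exact hw)
    have hp2 : (Walk.cons h1.symm (Walk.cons hxw (Walk.cons h2 Walk.nil))).IsPath := by
      simp [Walk.cons_isPath_iff, h1.ne', h2.ne, hxw.ne, hxu', huw, hne]
    exact path_ne ht p1 (Walk.cons h1.symm (Walk.cons hxw (Walk.cons h2 Walk.nil)))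
      hp1 hp2 hx1 (by simp)



lemma card_cc [Finite W] {H : SimpleGraph W} {T : Set W}
    (hinj : ∀ u1 ∈ T, ∀ u2 ∈ T, H.Reachable u1 u2 → u1 = u2)
    (hsurj : ∀ v : W, ∃ u ∈ T, H.Reachable u v) :
    Nat.card H.ConnectedComponent = T.ncard := by
  rw [← Nat.card_coe_set_eq]
  refine (Nat.card_eq_of_bijective (fun u : ↥T => H.connectedComponentMk ↑u) ⟨?_, ?_⟩).symm
  · intro a b h
    exact Subtype.ext (hinj _ a.2 _ b.2 (ConnectedComponent.eq.mp h))
  · intro c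
    induction c using ConnectedComponent.ind with
    | _ v =>
      obtain ⟨u, hu, hr⟩ := hsurj v
      exact ⟨⟨u, hu⟩, ConnectedComponent.eq.mpr hr⟩

lemma card_eq_sum_supp [Fintype W] (H : SimpleGraph W) [Fintype H.ConnectedComponent] :
    Nat.card W = ∑ c : H.ConnectedComponent, c.supp.ncard := by
  classical
  have h1 : ∀ c : H.ConnectedComponent, c.supp.ncard =
      (Finset.univ.filter fun v => H.connectedComponentMk v = c).card := by
    intro c
    rw [Set.ncard_eq_toFinset_card' c.supp]
    congr 1
    ext v
    simp [ConnectedComponent.mem_supp_iff]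
  rw [Nat.card_eq_fintype_card, Fintype.card, Finset.card_eq_sum_card_fiberwise
    (f := H.connectedComponentMk) (t := Finset.univ) (fun v _ => Finset.mem_univ _)]
  exact Finset.sum_congr rfl fun c _ => (h1 c).symm

lemma squeeze {α : Type*} [Fintype α] (f : α → ℕ) (M m : ℕ) (c₀ : α)
    (h0 : f c₀ ≤ M) (h1 : ∀ c, c ≠ c₀ → f c ≤ m)
    (htot : ∑ c, f c = M + (Fintype.card α - 1) * m) :
    f c₀ = M ∧ ∀ c, c ≠ c₀ → f c = m := by
  classical
  set g : α → ℕ := fun c => if c = c₀ then M else m with hg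
  have hfg : ∀ c ∈ Finset.univ, f c ≤ g c := by
    intro c _
    by_cases h : c = c₀
    · subst h; simp [hg, h0]
    · simp [hg, h, h1 c h]
  have hsumg : ∑ c, g c = M + (Fintype.card α - 1) * m := by
    rw [← Finset.sum_erase_add _ _ (Finset.mem_univ c₀)]
    have he : ∀ c ∈ Finset.univ.erase c₀, g c = m := by
      intro c hc
      simp [hg, (Finset.mem_erase.mp hc).1]
    rw [Finset.sum_congr rfl he, Finset.sum_const, Finset.card_erase_of_mem (Finset.mem_univ _)]
    have : g c₀ = M := by simp [hg]
    rw [this, smul_eq_mul, Fintype.card]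
    ring
  have hpt := (Finset.sum_eq_sum_iff_of_le hfg).mp (htot.trans hsumg.symm)
  constructor
  · have := hpt c₀ (Finset.mem_univ _)
    simpa [hg] using this
  · intro c hc
    have := hpt c (Finset.mem_univ _)
    simpa [hg, hc] using this


end StarAux

theorem stmt_2 {V : Type*} (G : SimpleGraph V) (x w : V) (s i : ℕ)
    (hs : 3 ≤ s) (htree : G.IsTree)
    (hdeg : (G.neighborSet x).ncard = s)
    (hother : ∀ v : V, v ≠ x → (G.neighborSet v).ncard ≤ 2)
    (hheight : ∀ v : V, G.dist w v ≤ i)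
    (hcard : Nat.card V = s * i) :
    (w = x ∧
      Nat.card (G.induce ({x}ᶜ : Set V)).ConnectedComponent = s ∧
      ∃ c₀ : (G.induce ({x}ᶜ : Set V)).ConnectedComponent,
        IsPathGraph ((G.induce ({x}ᶜ : Set V)).induce c₀.supp) (i - 1) ∧
        ∀ c : (G.induce ({x}ᶜ : Set V)).ConnectedComponent, c ≠ c₀ →
          IsPathGraph ((G.induce ({x}ᶜ : Set V)).induce c.supp) i) ∨
    (G.dist x w = 1 ∧ s = 3 ∧
      Nat.card (G.induce (({x, w} : Set V)ᶜ)).ConnectedComponent = 3 ∧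
      ∃ c₀ : (G.induce (({x, w} : Set V)ᶜ)).ConnectedComponent,
        IsPathGraph ((G.induce (({x, w} : Set V)ᶜ)).induce c₀.supp) i ∧
        ∀ c : (G.induce (({x, w} : Set V)ᶜ)).ConnectedComponent, c ≠ c₀ →
          IsPathGraph ((G.induce (({x, w} : Set V)ᶜ)).induce c.supp) (i - 1)) := by
  classical
  open StarAux in
  obtain ⟨hconn, hacyc⟩ := htree
  have htree : G.IsTree := ⟨hconn, hacyc⟩
  -- i ≥ 1
  have hi : 1 ≤ i := by
    by_contra h
    have hi0 : i = 0 := by omega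
    have hall : ∀ v : V, v = w := by
      intro v
      have hv := hheight v
      rw [hi0, Nat.le_zero] at hv
      exact ((hconn.dist_eq_zero_iff).mp hv).symm
    have hempty : (G.neighborSet x).ncard = 0 := by
      have he : G.neighborSet x = ∅ := by
        ext v
        simp only [mem_neighborSet, Set.mem_empty_iff_false, iff_false]
        intro hadj
        exact hadj.ne ((hall x).trans (hall v).symm)
      simp [he]
    omega
  have hfin : Finite V := by
    have hpos : 0 < Nat.card V := by
      rw [hcard]; exact Nat.mul_pos (by omega) (by omega)
    exact (Nat.card_pos_iff.mp hpos).2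
  have _inst1 : Fintype V := Fintype.ofFinite V
  have _inst2 : Fintype ↥({x}ᶜ : Set V) := Fintype.ofFinite _
  set H1 := G.induce ({x}ᶜ : Set V) with hH1
  have _inst3 : Fintype H1.ConnectedComponent := Fintype.ofFinite _
  have hxS : x ∈ ({x} : Set V) := Set.mem_singleton x
  set T : Set ↥({x}ᶜ : Set V) := {u | G.Adj x ↑u} with hT
  have hinjT : ∀ u1 ∈ T, ∀ u2 ∈ T, H1.Reachable u1 u2 → u1 = u2 := by
    intro u1 h1 u2 h2 hr
    exact Subtype.ext (boundary_inj htree hxS h1 h2 u1.2 u2.2 hr)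
  have hsurjT : ∀ v : ↥({x}ᶜ : Set V), ∃ u ∈ T, H1.Reachable u v := by
    intro v
    obtain ⟨p, hp, hlen⟩ := hconn.exists_path_of_dist x ↑v
    obtain ⟨u, hu, hadj, hr, _⟩ := second_vertex (S := {x}) p hp hxS v.2 (fun y _ hy => hy)
    exact ⟨⟨u, hu⟩, hadj, hr⟩
  have hcc1 : Nat.card H1.ConnectedComponent = s := by
    rw [card_cc hinjT hsurjT]
    have himg : Subtype.val '' T = G.neighborSet x := by
      ext u
      constructor
      · rintro ⟨u', hu', rfl⟩
        exact hu'
      · intro h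
        exact ⟨⟨u, h.ne'⟩, h, rfl⟩
    rw [← hdeg, ← himg, Set.ncard_image_of_injective T Subtype.val_injective]
  have hdegH1 : ∀ v : ↥({x}ᶜ : Set V), (H1.neighborSet v).ncard ≤ 2 := by
    intro v
    exact le_trans (ncard_neighbor_induce_le v (G.neighborSet ↑v) (fun _ h => h)
      (Set.toFinite _)) (hother ↑v v.2)
  have hdeg1u : ∀ u : ↥({x}ᶜ : Set V), u ∈ T → (H1.neighborSet u).ncard ≤ 1 := by
    intro u hadj
    have h2 : (G.neighborSet ↑u \ {x}).ncard = (G.neighborSet ↑u).ncard - 1 :=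
      Set.ncard_diff_singleton_of_mem (Adj.symm hadj)
    have h3 := hother ↑u u.2
    refine le_trans (ncard_neighbor_induce_le u (G.neighborSet ↑u \ {x}) ?_ (Set.toFinite _))
      (by omega)
    intro u' hadj'
    exact ⟨hadj', u'.2⟩
  have hdistH1 : ∀ u : ↥({x}ᶜ : Set V), u ∈ T → ∀ v : ↥({x}ᶜ : Set V), H1.Reachable u v →
      H1.dist u v + 1 ≤ G.dist x ↑v := by
    intro u hu v hr
    obtain ⟨p, hp, hlen⟩ := hconn.exists_path_of_dist x ↑v
    obtain ⟨u₂, hu₂, hadj₂, hr₂, hd₂⟩ := second_vertex (S := {x}) p hp hxS v.2 (fun y _ hy => hy)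
    have he : (⟨u₂, hu₂⟩ : ↥({x}ᶜ : Set V)) = u :=
      Subtype.ext (boundary_inj htree hxS hadj₂ hu hu₂ u.2 (hr₂.trans hr.symm))
    rw [he] at hd₂
    have hd₂' : H1.dist u v + 1 ≤ p.length := hd₂
    omega
  have htotal : ∑ c : H1.ConnectedComponent, c.supp.ncard = s * i - 1 := by
    rw [← card_eq_sum_supp]
    rw [Nat.card_coe_set_eq]
    have hcompl := Set.ncard_add_ncard_compl ({x} : Set V)
    rw [Set.ncard_singleton, hcard] at hcompl
    omega
  have hreps : ∀ c : H1.ConnectedComponent, ∃ u ∈ T, c = H1.connectedComponentMk u := by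
    intro c
    induction c using ConnectedComponent.ind with
    | _ v =>
      obtain ⟨u, hu, hr⟩ := hsurjT v
      exact ⟨u, hu, (ConnectedComponent.eq.mpr hr).symm⟩
  rcases eq_or_ne w x with rfl | hwx
  · -- case w = x
    left
    have hbound : ∀ c : H1.ConnectedComponent, c.supp.ncard ≤ i := by
      intro c
      obtain ⟨u, hu, rfl⟩ := hreps c
      refine card_supp_le hdegH1 u (hdeg1u u hu) i ?_
      intro v hr
      have h1 := hdistH1 u hu v hr
      have h2 := hheight ↑v
      omega
    have hccF : Fintype.card H1.ConnectedComponent = s := by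
      rw [← Nat.card_eq_fintype_card, hcc1]
    have hex : ∃ c₀ : H1.ConnectedComponent, c₀.supp.ncard ≤ i - 1 := by
      by_contra hno
      push_neg at hno
      have hall : ∀ c : H1.ConnectedComponent, c.supp.ncard = i := fun c => by
        have h1 := hbound c; have h2 := hno c; omega
      have hsum : ∑ c : H1.ConnectedComponent, c.supp.ncard = s * i := by
        rw [Finset.sum_congr rfl fun c _ => hall c, Finset.sum_const, smul_eq_mul,
          ← Fintype.card, hccF]
      rw [htotal] at hsum
      have h3 : 3 ≤ s * i := le_trans hs (Nat.le_mul_of_pos_right s (by omega))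
      omega
    obtain ⟨c₀, hc₀⟩ := hex
    have htot' : ∑ c : H1.ConnectedComponent, c.supp.ncard =
        (i - 1) + (Fintype.card H1.ConnectedComponent - 1) * i := by
      rw [htotal, hccF]
      have h1 : 1 ≤ s * i := by
        calc 1 ≤ s := by omega
        _ ≤ s * i := Nat.le_mul_of_pos_right s (by omega)
      zify [hi, show 1 ≤ s by omega, h1]
      ring
    have hsq := squeeze (fun c => c.supp.ncard) (i - 1) i c₀ hc₀ (fun c hc => hbound c) htot'
    refine ⟨rfl, hcc1, c₀, ?_, ?_⟩
    · refine ⟨⟨connected_induce_supp c₀, isAcyclic_induce (isAcyclic_induce hacyc _) _⟩, ?_, ?_⟩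
      · rw [Nat.card_coe_set_eq]
        exact hsq.1
      · intro v
        exact le_trans (ncard_neighbor_induce_le v (H1.neighborSet ↑v) (fun _ h => h)
          (Set.toFinite _)) (hdegH1 ↑v)
    · intro c hc
      refine ⟨⟨connected_induce_supp c, isAcyclic_induce (isAcyclic_induce hacyc _) _⟩, ?_, ?_⟩
      · rw [Nat.card_coe_set_eq]
        exact hsq.2 c hc
      · intro v
        exact le_trans (ncard_neighbor_induce_le v (H1.neighborSet ↑v) (fun _ h => h)
          (Set.toFinite _)) (hdegH1 ↑v)
  · -- case w ≠ x
    have hd1 : 1 ≤ G.dist x w := hconn.pos_dist_of_ne (Ne.symm hwx)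
    have hdi : G.dist x w ≤ i := by
      have h0 := hheight x
      rwa [SimpleGraph.dist_comm] at h0
    have hwS : w ∈ ({x}ᶜ : Set V) := hwx
    obtain ⟨uw, huwT, hruw⟩ := hsurjT ⟨w, hwS⟩
    set cw := H1.connectedComponentMk uw with hcw
    have hsw : cw.supp.ncard ≤ G.dist x w + i := by
      refine card_supp_le hdegH1 uw (hdeg1u uw huwT) _ ?_
      intro v hr
      have h1 := hdistH1 uw huwT v hr
      have h2 : G.dist x ↑v ≤ G.dist x w + G.dist w ↑v := hconn.dist_triangle
      have h3 := hheight ↑v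
      omega
    have hso : ∀ c : H1.ConnectedComponent, c ≠ cw → c.supp.ncard ≤ i - G.dist x w := by
      intro c hcne
      obtain ⟨u, hu, rfl⟩ := hreps c
      refine card_supp_le hdegH1 u (hdeg1u u hu) _ ?_
      intro v hr
      obtain ⟨P, hP, hPlen⟩ := hconn.exists_path_of_dist w ↑v
      have hxP : x ∈ P.support := by
        by_contra hxP
        obtain ⟨q, _⟩ := toInduce (s := ({x}ᶜ : Set V)) P
          (fun y hy he => hxP ((Set.eq_of_mem_singleton he) ▸ hy)) hwS v.2
        apply hcne
        rw [hcw]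
        calc H1.connectedComponentMk u = H1.connectedComponentMk v :=
              ConnectedComponent.eq.mpr hr
          _ = H1.connectedComponentMk ⟨w, hwS⟩ := (ConnectedComponent.eq.mpr ⟨q⟩).symm
          _ = H1.connectedComponentMk uw := (ConnectedComponent.eq.mpr hruw).symm
      have hQR : (P.takeUntil x hxP).length + (P.dropUntil x hxP).length = P.length := by
        rw [← Walk.length_append, Walk.take_spec]
      have hRd : G.dist w x ≤ (P.takeUntil x hxP).length := SimpleGraph.dist_le _
      have hQpath := hP.dropUntil hxP
      obtain ⟨u₂, hu₂, hadj₂, hr₂, hd₂⟩ := second_vertex (S := {x}) (P.dropUntil x hxP)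
        hQpath hxS v.2 (fun y _ hy => hy)
      have he : (⟨u₂, hu₂⟩ : ↥({x}ᶜ : Set V)) = u :=
        Subtype.ext (boundary_inj htree hxS hadj₂ hu hu₂ u.2 (hr₂.trans hr.symm))
      rw [he] at hd₂
      have hd₂' : H1.dist u v + 1 ≤ (P.dropUntil x hxP).length := hd₂
      have hPl : P.length ≤ i := by rw [hPlen]; exact hheight ↑v
      have hwx' : G.dist w x = G.dist x w := SimpleGraph.dist_comm
      omega
    have hccF : Fintype.card H1.ConnectedComponent = s := by
      rw [← Nat.card_eq_fintype_card, hcc1]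
    have hsum : s * i - 1 ≤ (G.dist x w + i) + (s - 1) * (i - G.dist x w) := by
      rw [← htotal, ← Finset.sum_erase_add _ _ (Finset.mem_univ cw)]
      have h1 : ∑ c ∈ Finset.univ.erase cw, c.supp.ncard ≤ (s - 1) * (i - G.dist x w) := by
        refine le_trans (Finset.sum_le_card_nsmul _ _ (i - G.dist x w)
          (fun c hc => hso c (Finset.mem_erase.mp hc).1)) ?_
        rw [Finset.card_erase_of_mem (Finset.mem_univ _), smul_eq_mul, ← Fintype.card, hccF]
      omega
    have hds : G.dist x w = 1 ∧ s = 3 := by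
      have h1 : 1 ≤ s * i := by
        calc 1 ≤ s := by omega
          _ ≤ s * i := Nat.le_mul_of_pos_right s (by omega)
      zify [hdi, show 1 ≤ s by omega, h1] at hsum
      have hs3 : (3 : ℤ) ≤ (s : ℤ) := by exact_mod_cast hs
      have hd1' : (1 : ℤ) ≤ (G.dist x w : ℤ) := by exact_mod_cast hd1
      have key : ((s : ℤ) - 2) * (G.dist x w : ℤ) ≤ 1 := by nlinarith [hsum]
      have hdle : (G.dist x w : ℤ) ≤ 1 := by
        nlinarith [key, mul_nonneg (by linarith : (0:ℤ) ≤ (s:ℤ) - 3)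
          (by linarith : (0:ℤ) ≤ (G.dist x w : ℤ))]
      have hsle : (s : ℤ) ≤ 3 := by
        nlinarith [key, mul_nonneg (by linarith : (0:ℤ) ≤ (s:ℤ) - 2)
          (by linarith : (0:ℤ) ≤ (G.dist x w : ℤ) - 1)]
      constructor
      · have : G.dist x w ≤ 1 := by exact_mod_cast hdle
        omega
      · have : s ≤ 3 := by exact_mod_cast hsle
        omega
    have hxw_adj : G.Adj x w := SimpleGraph.dist_eq_one_iff_adj.mp hds.1
    -- phase 2 : remove {x, w}
    set S2 : Set V := {x, w} with hS2
    have hxS2 : x ∈ S2 := Set.mem_insert x {w}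
    have hwS2 : w ∈ S2 := Set.mem_insert_of_mem x rfl
    have hmemS2c : ∀ v : V, v ∈ S2ᶜ ↔ v ≠ x ∧ v ≠ w := by
      intro v
      simp [hS2, not_or]
    set H2 := G.induce S2ᶜ with hH2
    have _inst4 : Fintype ↥(S2ᶜ) := Fintype.ofFinite _
    have _inst5 : Fintype H2.ConnectedComponent := Fintype.ofFinite _
    set T2 : Set ↥(S2ᶜ) := {u | G.Adj x ↑u ∨ G.Adj w ↑u} with hT2
    have hinj2 : ∀ u1 ∈ T2, ∀ u2 ∈ T2, H2.Reachable u1 u2 → u1 = u2 := by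
      rintro u1 h1 u2 h2 hr
      rcases h1 with h1 | h1 <;> rcases h2 with h2 | h2
      · exact Subtype.ext (boundary_inj htree hxS2 h1 h2 u1.2 u2.2 hr)
      · exact (boundary_inj2 htree hxS2 hwS2 hxw_adj h1 h2 u1.2 u2.2 hr).elim
      · exact (boundary_inj2 htree hxS2 hwS2 hxw_adj h2 h1 u2.2 u1.2 hr.symm).elim
      · exact Subtype.ext (boundary_inj htree hwS2 h1 h2 u1.2 u2.2 hr)
    have hdich : ∀ v : ↥(S2ᶜ), ∃ u : ↥(S2ᶜ), u ∈ T2 ∧ H2.Reachable u v ∧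
        ((G.Adj x ↑u ∧ H2.dist u v + 2 ≤ i) ∨ (G.Adj w ↑u ∧ H2.dist u v + 1 ≤ i)) := by
      intro v
      obtain ⟨P, hP, hPlen⟩ := hconn.exists_path_of_dist w ↑v
      have hPl : P.length ≤ i := by rw [hPlen]; exact hheight ↑v
      by_cases hxP : x ∈ P.support
      · have hQR : (P.takeUntil x hxP).length + (P.dropUntil x hxP).length = P.length := by
          rw [← Walk.length_append, Walk.take_spec]
        have hRd : 1 ≤ (P.takeUntil x hxP).length := by
          have h0 := SimpleGraph.dist_le (P.takeUntil x hxP)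
          have h1 : G.dist w x = 1 := by rw [SimpleGraph.dist_comm]; exact hds.1
          omega
        have hQpath := hP.dropUntil hxP
        have hwQ : w ∉ (P.dropUntil x hxP).support := by
          intro hw'
          have hnd := hP.support_nodup
          rw [← Walk.take_spec P hxP, Walk.support_append] at hnd
          have h1 : w ∈ (P.takeUntil x hxP).support := Walk.start_mem_support _
          have h2 : w ∈ (P.dropUntil x hxP).support.tail := by
            have hcons := Walk.support_eq_cons (P.dropUntil x hxP)
            rw [hcons] at hw'
            rcases List.mem_cons.mp hw' with he | h
            · exact absurd he hwx
            · exact h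
          exact (List.disjoint_of_nodup_append hnd) h1 h2
        obtain ⟨u₂, hu₂, hadj₂, hr₂, hd₂⟩ := second_vertex (S := S2) (P.dropUntil x hxP)
          hQpath hxS2 v.2 (fun y hy hyS => by
            rcases Set.mem_insert_iff.mp hyS with he | he
            · exact he
            · rw [Set.eq_of_mem_singleton he] at hy
              exact absurd hy hwQ)
        refine ⟨⟨u₂, hu₂⟩, Or.inl hadj₂, hr₂, Or.inl ⟨hadj₂, ?_⟩⟩
        have hd₂' : H2.dist ⟨u₂, hu₂⟩ v + 1 ≤ (P.dropUntil x hxP).length := hd₂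
        omega
      · obtain ⟨u₂, hu₂, hadj₂, hr₂, hd₂⟩ := second_vertex (S := S2) P hP hwS2 v.2
          (fun y hy hyS => by
            rcases Set.mem_insert_iff.mp hyS with he | he
            · rw [he] at hy
              exact absurd hy hxP
            · exact Set.eq_of_mem_singleton he)
        refine ⟨⟨u₂, hu₂⟩, Or.inr hadj₂, hr₂, Or.inr ⟨hadj₂, ?_⟩⟩
        have hd₂' : H2.dist ⟨u₂, hu₂⟩ v + 1 ≤ P.length := hd₂
        omega
    have hsurj2 : ∀ v : ↥(S2ᶜ), ∃ u ∈ T2, H2.Reachable u v := fun v => by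
      obtain ⟨u, hu, hr, _⟩ := hdich v
      exact ⟨u, hu, hr⟩
    have hreps2 : ∀ c : H2.ConnectedComponent, ∃ u ∈ T2, c = H2.connectedComponentMk u := by
      intro c
      induction c using ConnectedComponent.ind with
      | _ v =>
        obtain ⟨u, hu, hr⟩ := hsurj2 v
        exact ⟨u, hu, (ConnectedComponent.eq.mpr hr).symm⟩
    have hdeg2 : ∀ v : ↥(S2ᶜ), (H2.neighborSet v).ncard ≤ 2 := by
      intro v
      exact le_trans (ncard_neighbor_induce_le v (G.neighborSet ↑v) (fun _ h => h)
        (Set.toFinite _)) (hother ↑v ((hmemS2c ↑v).mp v.2).1)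
    have hdeg2u : ∀ u : ↥(S2ᶜ), u ∈ T2 → (H2.neighborSet u).ncard ≤ 1 := by
      intro u hu
      rcases hu with hu | hu
      · have h2 : (G.neighborSet ↑u \ {x}).ncard = (G.neighborSet ↑u).ncard - 1 :=
          Set.ncard_diff_singleton_of_mem hu.symm
        have h3 := hother ↑u ((hmemS2c ↑u).mp u.2).1
        refine le_trans (ncard_neighbor_induce_le u (G.neighborSet ↑u \ {x}) ?_
          (Set.toFinite _)) (by omega)
        intro u' hadj'
        exact ⟨hadj', ((hmemS2c ↑u').mp u'.2).1⟩
      · have h2 : (G.neighborSet ↑u \ {w}).ncard = (G.neighborSet ↑u).ncard - 1 :=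
          Set.ncard_diff_singleton_of_mem hu.symm
        have h3 := hother ↑u ((hmemS2c ↑u).mp u.2).1
        refine le_trans (ncard_neighbor_induce_le u (G.neighborSet ↑u \ {w}) ?_
          (Set.toFinite _)) (by omega)
        intro u' hadj'
        exact ⟨hadj', ((hmemS2c ↑u').mp u'.2).2⟩
    have hsize2 : ∀ u : ↥(S2ᶜ), u ∈ T2 →
        (G.Adj x ↑u → (H2.connectedComponentMk u).supp.ncard ≤ i - 1) ∧
        (G.Adj w ↑u → (H2.connectedComponentMk u).supp.ncard ≤ i) := by
      intro u hu
      have hkey : ∀ v : ↥(S2ᶜ), H2.Reachable u v →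
          ((G.Adj x ↑u ∧ H2.dist u v + 2 ≤ i) ∨ (G.Adj w ↑u ∧ H2.dist u v + 1 ≤ i)) := by
        intro v hr
        obtain ⟨u₃, hu₃, hr₃, hb⟩ := hdich v
        have he : u₃ = u := hinj2 u₃ hu₃ u hu (hr₃.trans hr.symm)
        rw [he] at hb
        exact hb
      constructor
      · intro hadjx
        refine card_supp_le hdeg2 u (hdeg2u u hu) _ ?_
        intro v hr
        rcases hkey v hr with ⟨_, hb⟩ | ⟨hadjw, _⟩
        · omega
        · exact (no_common htree hxw_adj hadjx hadjw).elim
      · intro hadjw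
        refine card_supp_le hdeg2 u (hdeg2u u hu) _ ?_
        intro v hr
        rcases hkey v hr with ⟨hadjx, _⟩ | ⟨_, hb⟩
        · exact (no_common htree hxw_adj hadjx hadjw).elim
        · omega
    have hcc2 : Nat.card H2.ConnectedComponent = T2.ncard := card_cc hinj2 hsurj2
    have himg2 : Subtype.val '' T2 = (G.neighborSet x \ {w}) ∪ (G.neighborSet w \ {x}) := by
      ext u
      constructor
      · rintro ⟨u', hu', rfl⟩
        rcases hu' with h | h
        · exact Or.inl ⟨h, ((hmemS2c ↑u').mp u'.2).2⟩
        · exact Or.inr ⟨h, ((hmemS2c ↑u').mp u'.2).1⟩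
      · rintro (⟨h, hne⟩ | ⟨h, hne⟩)
        · exact ⟨⟨u, (hmemS2c u).mpr ⟨h.ne', hne⟩⟩, Or.inl h, rfl⟩
        · exact ⟨⟨u, (hmemS2c u).mpr ⟨hne, h.ne'⟩⟩, Or.inr h, rfl⟩
    have hdisj2 : Disjoint (G.neighborSet x \ {w}) (G.neighborSet w \ {x}) := by
      rw [Set.disjoint_left]
      rintro u ⟨h1, _⟩ ⟨h2, _⟩
      exact no_common htree hxw_adj h1 h2
    have hnx : (G.neighborSet x \ {w}).ncard = 2 := by
      rw [Set.ncard_diff_singleton_of_mem (s := G.neighborSet x) hxw_adj, hdeg, hds.2]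
    have hnwle : (G.neighborSet w \ {x}).ncard ≤ 1 := by
      rw [Set.ncard_diff_singleton_of_mem (s := G.neighborSet w) hxw_adj.symm]
      have h0 := hother w hwx
      omega
    have hT2card : T2.ncard = 2 + (G.neighborSet w \ {x}).ncard := by
      rw [← Set.ncard_image_of_injective T2 Subtype.val_injective, himg2,
        Set.ncard_union_eq hdisj2 (Set.toFinite _) (Set.toFinite _), hnx]
    have htotal2 : ∑ c : H2.ConnectedComponent, c.supp.ncard = 3 * i - 2 := by
      rw [← card_eq_sum_supp, Nat.card_coe_set_eq]
      have hcompl := Set.ncard_add_ncard_compl S2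
      have hpair : S2.ncard = 2 := Set.ncard_pair (Ne.symm hwx)
      rw [hpair, hcard, hds.2] at hcompl
      omega
    have hnw : (G.neighborSet w \ {x}).ncard = 1 := by
      by_contra hne0
      have h0 : (G.neighborSet w \ {x}).ncard = 0 := by omega
      have hempty : G.neighborSet w \ {x} = ∅ := (Set.ncard_eq_zero (Set.toFinite _)).mp h0
      have hallx : ∀ u : ↥(S2ᶜ), u ∈ T2 → G.Adj x ↑u := by
        intro u hu
        rcases hu with h | h
        · exact h
        · exact absurd (⟨h, ((hmemS2c ↑u).mp u.2).1⟩ : (↑u : V) ∈ G.neighborSet w \ {x})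
            (Set.eq_empty_iff_forall_notMem.mp hempty _)
      have hboundall : ∀ c : H2.ConnectedComponent, c.supp.ncard ≤ i - 1 := by
        intro c
        obtain ⟨u, hu, rfl⟩ := hreps2 c
        exact (hsize2 u hu).1 (hallx u hu)
      have hsum2 : ∑ c : H2.ConnectedComponent, c.supp.ncard ≤
          (Fintype.card H2.ConnectedComponent) * (i - 1) := by
        refine le_trans (Finset.sum_le_card_nsmul _ _ (i - 1) (fun c _ => hboundall c)) ?_
        rw [smul_eq_mul, ← Fintype.card]
      have hccn : Fintype.card H2.ConnectedComponent = 2 := by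
        rw [← Nat.card_eq_fintype_card, hcc2, hT2card, h0]
      rw [htotal2, hccn] at hsum2
      omega
    obtain ⟨u', hu'⟩ := Set.ncard_eq_one.mp hnw
    have hu'mem : u' ∈ G.neighborSet w \ {x} := hu'.symm.subset (Set.mem_singleton u')
    have hu'w : G.Adj w u' := hu'mem.1
    have hu'S : u' ∈ S2ᶜ := (hmemS2c u').mpr ⟨hu'mem.2, hu'w.ne'⟩
    set c₀ := H2.connectedComponentMk ⟨u', hu'S⟩ with hc₀def
    have hu'T : (⟨u', hu'S⟩ : ↥(S2ᶜ)) ∈ T2 := Or.inr hu'w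
    have hccn3 : Fintype.card H2.ConnectedComponent = 3 := by
      rw [← Nat.card_eq_fintype_card, hcc2, hT2card, hnw]
    have hb0 : c₀.supp.ncard ≤ i := (hsize2 _ hu'T).2 hu'w
    have hb1 : ∀ c : H2.ConnectedComponent, c ≠ c₀ → c.supp.ncard ≤ i - 1 := by
      intro c hc
      obtain ⟨u, hu, rfl⟩ := hreps2 c
      have hu2 := hu
      rcases hu2 with h | h
      · exact (hsize2 u hu).1 h
      · exfalso
        have hm : (↑u : V) ∈ G.neighborSet w \ {x} := ⟨h, ((hmemS2c ↑u).mp u.2).1⟩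
        have hm2 : (↑u : V) ∈ ({u'} : Set V) := hu'.subset hm
        have heq : (u : ↥(S2ᶜ)) = ⟨u', hu'S⟩ := Subtype.ext (Set.eq_of_mem_singleton hm2)
        exact hc (by rw [hc₀def, heq])
    have htot2' : ∑ c : H2.ConnectedComponent, c.supp.ncard =
        i + (Fintype.card H2.ConnectedComponent - 1) * (i - 1) := by
      rw [htotal2, hccn3]
      omega
    have hsq2 := squeeze (fun c => c.supp.ncard) i (i - 1) c₀ hb0 hb1 htot2'
    refine Or.inr ⟨hds.1, hds.2, ?_, c₀, ?_, ?_⟩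
    · rw [hcc2, hT2card, hnw]
    · refine ⟨⟨connected_induce_supp c₀, isAcyclic_induce (isAcyclic_induce hacyc _) _⟩, ?_, ?_⟩
      · rw [Nat.card_coe_set_eq]
        exact hsq2.1
      · intro v
        exact le_trans (ncard_neighbor_induce_le v (H2.neighborSet ↑v) (fun _ h => h)
          (Set.toFinite _)) (hdeg2 ↑v)
    · intro c hc
      refine ⟨⟨connected_induce_supp c, isAcyclic_induce (isAcyclic_induce hacyc _) _⟩, ?_, ?_⟩
      · rw [Nat.card_coe_set_eq]
        exact hsq2.2 c hc
      · intro v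
        exact le_trans (ncard_neighbor_induce_le v (H2.neighborSet ↑v) (fun _ h => h)
          (Set.toFinite _)) (hdeg2 ↑v)
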